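/- Let t ≥ 3, t′ ≥ 2, and let F be a finite set of finite simple graphs such that F contains a graph isomorphic to the complete graph K_t, F contains a graph isomorphic to the complete bipartite graph K_{1,t′}, and every graph in F has at least one edge. Let R ∈ ℕ be such that every finite simple graph on at least R vertices contains a clique of size t or an independent set of size t′. Let G = (V, E) be a finite simple graph, let k ∈ ℕ with |V| ≥ k + R, and let B be the set of blockers of Φ(G). Then there exists X ⊆ V with |X| ≤ k such that G − X is F-free, if and only if there exists a set X′ of vertices of Φ(G) with |X′| ≤ k + |B| such that Φ(G) − X′ is F-free. -/

import Mathlib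

/-- The blockers of `Φ(G)`: one new vertex for each unordered pair of distinct
non-adjacent vertices of `G`. -/
def Blocker {V : Type} (G : SimpleGraph V) : Type :=
  {e : Sym2 V // ¬ e.IsDiag ∧ e ∉ G.edgeSet}

/-- The transformation `Φ`: the graph on `V ⊕ B` containing all edges of `G`,
in which every blocker is adjacent to all other vertices. -/
def Phi {V : Type} (G : SimpleGraph V) : SimpleGraph (V ⊕ Blocker G) :=
  SimpleGraph.fromRel (fun x y =>
    match x, y with
    | Sum.inl u, Sum.inl v => G.Adj u v
    | _, _ => True)


variable {V : Type} (G : SimpleGraph V)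

lemma phi_adj_inl_inl (u v : V) : (Phi G).Adj (Sum.inl u) (Sum.inl v) ↔ G.Adj u v := by
  simp only [Phi, SimpleGraph.fromRel_adj]
  constructor
  · rintro ⟨h1, h2 | h2⟩
    · exact h2
    · exact h2.symm
  · intro h
    exact ⟨by simpa using h.ne, Or.inl h⟩

lemma phi_adj_inr (x : V ⊕ Blocker G) (b : Blocker G) :
    (Phi G).Adj x (Sum.inr b) ↔ x ≠ Sum.inr b := by
  cases x <;> simp [Phi, SimpleGraph.fromRel_adj]

noncomputable def phiIso (S : Set V) :
    G.induce S ≃g (Phi G).induce (Sum.inl '' S) where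
  toEquiv := Equiv.Set.image Sum.inl S Sum.inl_injective
  map_rel_iff' := by
    rintro ⟨u, hu⟩ ⟨v, hv⟩
    simp [SimpleGraph.comap, Equiv.Set.image, Equiv.Set.imageOfInjOn, phi_adj_inl_inl]

lemma ncard_aux [Fintype V] (X : Set V) :
    (Sum.inl '' X ∪ Set.range (Sum.inr : Blocker G → V ⊕ Blocker G)).ncard
      = X.ncard + Nat.card (Blocker G) := by
  have hfin : Finite (Blocker G) := by unfold Blocker; infer_instance
  rw [Set.ncard_union_eq (by rw [Set.disjoint_left]; rintro x ⟨v, hv, rfl⟩ ⟨b, hb⟩; simp at hb)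
      (Set.toFinite _) (Set.toFinite _),
    Set.ncard_image_of_injective _ Sum.inl_injective]
  congr 1
  rw [← Nat.card_coe_set_eq]
  exact Nat.card_range_of_injective Sum.inr_injective

lemma compl_aux (X : Set V) :
    (Sum.inl '' X ∪ Set.range (Sum.inr : Blocker G → V ⊕ Blocker G))ᶜ
      = Sum.inl '' Xᶜ := by
  ext x
  cases x <;> simp


theorem stmt_13 {V ι : Type} [Fintype V] [Fintype ι]
    (t t' : ℕ) (ht : 3 ≤ t) (ht' : 2 ≤ t')
    -- the finite family `F` of finite graphs
    (nF : ι → ℕ) (F : ∀ i, SimpleGraph (Fin (nF i)))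
    -- `F` contains a graph isomorphic to `K_t`
    (hKt : ∃ i, Nonempty ((F i) ≃g SimpleGraph.completeGraph (Fin t)))
    -- `F` contains a graph isomorphic to `K_{1,t'}`
    (hK1t' : ∃ i, Nonempty ((F i) ≃g completeBipartiteGraph (Fin 1) (Fin t')))
    -- every graph in `F` has at least one edge
    (hedge : ∀ i, ∃ u v : Fin (nF i), (F i).Adj u v)
    -- Ramsey-type hypothesis: every graph on at least `R` vertices contains a
    -- clique of size `t` or an independent set of size `t'`
    (R : ℕ)
    (hR : ∀ (W : Type) [Fintype W] (H : SimpleGraph W), R ≤ Fintype.card W →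
      ¬ H.CliqueFree t ∨ ¬ (Hᶜ).CliqueFree t')
    (G : SimpleGraph V) (k : ℕ) (hcard : k + R ≤ Fintype.card V) :
    (∃ X : Set V, X.ncard ≤ k ∧
        ∀ i, ¬ Nonempty ((F i) ↪g G.induce Xᶜ)) ↔
      (∃ X' : Set (V ⊕ Blocker G), X'.ncard ≤ k + Nat.card (Blocker G) ∧
        ∀ i, ¬ Nonempty ((F i) ↪g (Phi G).induce X'ᶜ)) := by
  classical
  haveI : Finite (Blocker G) := by unfold Blocker; infer_instance
  constructor
  · rintro ⟨X, hX, hfree⟩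
    refine ⟨Sum.inl '' X ∪ Set.range Sum.inr, ?_, ?_⟩
    · rw [ncard_aux]; omega
    · rintro i ⟨f⟩
      rw [compl_aux] at f
      exact hfree i ⟨((phiIso G Xᶜ).symm.toEmbedding).comp f⟩
  · rintro ⟨X', hX', hfree⟩
    by_cases hall : Set.range (Sum.inr : Blocker G → V ⊕ Blocker G) ⊆ X'
    · have hXeq : X' = Sum.inl '' (Sum.inl ⁻¹' X') ∪ Set.range Sum.inr := by
        ext x
        cases x with
        | inl v => simp
        | inr b => simp [hall (Set.mem_range_self b)]
      have hc : X'ᶜ = Sum.inl '' (Sum.inl ⁻¹' X')ᶜ := by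
        ext x
        cases x with
        | inl v => simp
        | inr b => simp [hall (Set.mem_range_self b)]
      refine ⟨Sum.inl ⁻¹' X', ?_, ?_⟩
      · have := hX'
        rw [hXeq, ncard_aux] at this
        omega
      · rintro i ⟨f⟩
        have h := hfree i
        rw [hc] at h
        exact h ⟨((phiIso G (Sum.inl ⁻¹' X')ᶜ).toEmbedding).comp f⟩
    · exfalso
      obtain ⟨xb, hxb, hnb⟩ := Set.not_subset.mp hall
      obtain ⟨b, rfl⟩ := hxb
      haveI : Fintype ↥X'ᶜ := Fintype.ofFinite _
      have hcardW : R ≤ Fintype.card ↥X'ᶜ := by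
        have h1 : X'.ncard + X'ᶜ.ncard = Nat.card (V ⊕ Blocker G) :=
          Set.ncard_add_ncard_compl X'
        have h2 : Nat.card (V ⊕ Blocker G) = Fintype.card V + Nat.card (Blocker G) := by
          rw [Nat.card_sum, Nat.card_eq_fintype_card]
        have h3 : Fintype.card ↥X'ᶜ = X'ᶜ.ncard := by
          rw [← Nat.card_coe_set_eq, Nat.card_eq_fintype_card]
        omega
      rcases hR ↥X'ᶜ ((Phi G).induce X'ᶜ) hcardW with hcl | hind
      · rw [SimpleGraph.cliqueFree_iff, not_isEmpty_iff] at hcl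
        obtain ⟨f⟩ := hcl
        obtain ⟨i, ⟨e⟩⟩ := hKt
        have f' : SimpleGraph.completeGraph (Fin t) ↪g (Phi G).induce X'ᶜ :=
          ⟨f.toEmbedding, fun {a b} => ⟨fun h =>
            (show a ≠ b by rintro rfl; exact ((Phi G).induce X'ᶜ).irrefl h), fun h => f.toHom.map_rel h⟩⟩
        exact hfree i ⟨f'.comp e.toEmbedding⟩
      · rw [SimpleGraph.cliqueFree_iff, not_isEmpty_iff] at hind
        obtain ⟨g⟩ := hind
        obtain ⟨i, ⟨e⟩⟩ := hK1t'
        set H := (Phi G).induce X'ᶜ with hH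
        have hb : Sum.inr b ∈ X'ᶜ := hnb
        set bb : ↥X'ᶜ := (⟨Sum.inr b, hb⟩ : ↥X'ᶜ) with hbb
        have hgi : ∀ j : Fin t', g j ≠ bb := by
          intro j hj
          obtain ⟨j', hj'⟩ := Fintype.exists_ne_of_one_lt_card (by simp; omega) j
          have hadj : (Hᶜ).Adj (g j') (g j) := g.toHom.map_rel (by simpa using hj')
          rw [SimpleGraph.compl_adj] at hadj
          apply hadj.2
          have hthis : (Phi G).Adj ((g j' : V ⊕ Blocker G)) (Sum.inr b) := by
            rw [phi_adj_inr]
            intro hv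
            apply hadj.1
            rw [hj]
            exact Subtype.ext hv
          rw [hj]
          exact hthis
        have hbadj : ∀ j : Fin t', H.Adj bb (g j) := by
          intro j
          have hthis : (Phi G).Adj ((g j : V ⊕ Blocker G)) (Sum.inr b) := by
            rw [phi_adj_inr]
            exact fun hv => hgi j (Subtype.ext hv)
          exact hthis.symm
        have hnadj : ∀ j j' : Fin t', ¬ H.Adj (g j) (g j') := by
          intro j j' hadj
          by_cases hjj : j = j'
          · subst hjj; exact H.irrefl hadj
          · have h2 := g.toHom.map_rel
              (show (⊤ : SimpleGraph (Fin t')).Adj j j' from by simpa using hjj)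
            rw [SimpleGraph.compl_adj] at h2
            exact h2.2 hadj
        have emb : completeBipartiteGraph (Fin 1) (Fin t') ↪g H := by
          refine ⟨⟨Sum.elim (fun _ => bb) (fun j => g j), ?_⟩, ?_⟩
          · rintro (x | x) (y | y) h
            · exact congrArg Sum.inl (Subsingleton.elim x y)
            · exact absurd h.symm (hgi y)
            · exact absurd h (hgi x)
            · exact congrArg Sum.inr (g.injective h)
          · rintro (x | x) (y | y)
            · exact ⟨fun h => absurd h (H.irrefl), fun h => by simp [completeBipartiteGraph] at h⟩
            · exact ⟨fun _ => by simp [completeBipartiteGraph], fun _ => hbadj y⟩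
            · exact ⟨fun _ => by simp [completeBipartiteGraph], fun _ => (hbadj x).symm⟩
            · exact ⟨fun h => absurd h (hnadj x y), fun h => by simp [completeBipartiteGraph] at h⟩
        exact hfree i ⟨emb.comp e.toEmbedding⟩
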